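/- Let L be a finite set with at least two elements and let φ be a permutation of L. Then there exists a circular order of L that φ preserves (i.e., there exists a permutation σ of L that is a single cycle with support all of L such that φ commutes with σ) if and only if all permutation cycles of φ have the same length, where each fixed point of φ is regarded as a cycle of length 1. -/

import Mathlib

/-- A permutation `φ` of a finite set `L` with at least two elements
preserves some circular order of `L` (encoded by a successor permutation `σ`, a single
cycle whose support is all of `L`, with `φ` commuting with `σ`) if and only if all
permutation cycles of `φ` have the same length (fixed points counting as cycles of
length 1, so the cycle length of `x` is the minimal period of `x` under `φ`). -/
theorem stmt_4 {L : Type*} [Fintype L] [DecidableEq L]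
    (hL : 2 ≤ Fintype.card L) (φ : Equiv.Perm L) :
    (∃ σ : Equiv.Perm L, σ.IsCycle ∧ σ.support = Finset.univ ∧ φ * σ = σ * φ) ↔
      ∀ x y : L, Function.minimalPeriod φ x = Function.minimalPeriod φ y := by
  constructor
  · rintro ⟨σ, hc, hs, hcomm⟩
    have hmove : ∀ z : L, σ z ≠ z := fun z =>
      Equiv.Perm.mem_support.mp (hs ▸ Finset.mem_univ z)
    have key : ∀ x y : L, Function.minimalPeriod φ x ∣ Function.minimalPeriod φ y := by
      intro x y
      obtain ⟨k, hk⟩ : σ.SameCycle y x := by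
        obtain ⟨a, ha1, ha⟩ := hc
        exact (ha (hmove y)).symm.trans (ha (hmove x))
      set p := Function.minimalPeriod φ y with hp
      have hC0 : Commute φ σ := hcomm
      have hC : Commute (φ ^ p) (σ ^ k) := (hC0.pow_left p).zpow_right k
      have hyper : (φ ^ p) y = y := Function.isPeriodicPt_minimalPeriod φ y
      have hx : (φ ^ p) x = x := by
        rw [← hk, ← Equiv.Perm.mul_apply, hC.eq, Equiv.Perm.mul_apply, hyper]
      exact Function.IsPeriodicPt.minimalPeriod_dvd hx
    exact fun x y => Nat.dvd_antisymm (key x y) (key y x)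
  · intro h
    obtain ⟨x0⟩ : Nonempty L := Fintype.card_pos_iff.mp (by omega)
    set d := Function.minimalPeriod φ x0 with hdDef
    have hdx : ∀ x : L, Function.minimalPeriod φ x = d := fun x => h x x0
    have hdpos : 0 < d := by
      refine Function.IsPeriodicPt.minimalPeriod_pos (orderOf_pos φ) ?_
      show φ^[orderOf φ] x0 = x0
      rw [Equiv.Perm.iterate_eq_pow, pow_orderOf_eq_one]; rfl
    haveI : NeZero d := ⟨hdpos.ne'⟩
    have hper : ∀ x : L, Function.IsPeriodicPt φ d x := fun x =>
      hdx x ▸ Function.isPeriodicPt_minimalPeriod φ x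
    -- quotient by cycles
    let s : Setoid L := ⟨φ.SameCycle,
      ⟨fun x => Equiv.Perm.SameCycle.refl φ x, fun h => h.symm, fun h1 h2 => h1.trans h2⟩⟩
    haveI : DecidableRel s.r := fun a b => inferInstanceAs (Decidable (φ.SameCycle a b))
    haveI : DecidableEq (Quotient s) := inferInstance
    set m := Fintype.card (Quotient s) with hmDef
    let f : ZMod d × Quotient s → L := fun p => φ^[p.1.val] p.2.out
    have hstep : ∀ (k : ℕ) (x : L), φ.SameCycle x (φ^[k] x) := fun k x =>
      ⟨(k : ℤ), by rw [zpow_natCast]; rfl⟩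
    have hfinj : Function.Injective f := by
      rintro ⟨j, q⟩ ⟨j', q'⟩ hEq
      simp only [f] at hEq
      have hsame : φ.SameCycle q.out q'.out :=
        (hstep j.val q.out).trans (hEq ▸ (hstep j'.val q'.out).symm)
      have hq : q = q' := Quotient.out_equiv_out.mp hsame
      subst hq
      have hval : j.val = j'.val := by
        rcases le_total j.val j'.val with hle | hle
        · by_contra hne
          have h1 : φ^[j.val] (φ^[j'.val - j.val] q.out) = φ^[j.val] q.out := by
            rw [← Function.iterate_add_apply]
            rw [Nat.add_sub_cancel' hle] at *
            exact hEq.symm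
          have h2 : φ^[j'.val - j.val] q.out = q.out :=
            (Function.Injective.iterate φ.injective j.val) h1
          have h3 : d ≤ j'.val - j.val := by
            have := Function.IsPeriodicPt.minimalPeriod_le (by omega) (h2 : Function.IsPeriodicPt φ _ q.out)
            rw [hdx] at this; exact this
          have := ZMod.val_lt j'
          omega
        · by_contra hne
          have h1 : φ^[j'.val] (φ^[j.val - j'.val] q.out) = φ^[j'.val] q.out := by
            rw [← Function.iterate_add_apply]
            rw [Nat.add_sub_cancel' hle] at *
            exact hEq
          have h2 : φ^[j.val - j'.val] q.out = q.out :=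
            (Function.Injective.iterate φ.injective j'.val) h1
          have h3 : d ≤ j.val - j'.val := by
            have := Function.IsPeriodicPt.minimalPeriod_le (by omega) (h2 : Function.IsPeriodicPt φ _ q.out)
            rw [hdx] at this; exact this
          have := ZMod.val_lt j
          omega
      exact Prod.ext (ZMod.val_injective d hval) rfl
    have hfsurj : Function.Surjective f := by
      intro x
      have hsame : φ.SameCycle (Quotient.mk s x).out x := Quotient.mk_out x
      obtain ⟨i, _, hi⟩ := hsame.exists_pow_eq'
      refine ⟨((i : ZMod d), Quotient.mk s x), ?_⟩
      show φ^[((i : ZMod d)).val] (Quotient.mk s x).out = x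
      rw [ZMod.val_natCast, (hper _).iterate_mod_apply]
      exact hi
    let E0 : ZMod d × Quotient s ≃ L := Equiv.ofBijective f ⟨hfinj, hfsurj⟩
    set n := Fintype.card L with hnDef
    have hcard : n = d * m := by
      rw [hnDef, ← Fintype.card_congr E0, Fintype.card_prod, ZMod.card]
    have hmpos : 0 < m := by
      rcases Nat.eq_zero_or_pos m with h0 | h; · rw [h0, Nat.mul_zero] at hcard; omega
      exact h
    have hmlen : m ≤ n := by rw [hcard]; exact Nat.le_mul_of_pos_left m hdpos
    haveI : NeZero n := ⟨by omega⟩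
    let G : ZMod n → ZMod d × Fin m :=
      fun z => (((z.val / m : ℕ) : ZMod d), ⟨z.val % m, Nat.mod_lt _ hmpos⟩)
    have hGinj : Function.Injective G := by
      intro z w hzw
      have h1 : ((z.val / m : ℕ) : ZMod d) = ((w.val / m : ℕ) : ZMod d) :=
        congrArg Prod.fst hzw
      have h2 : z.val % m = w.val % m := congrArg (fun p => (Prod.snd p : Fin m).val) hzw
      have hzlt : z.val / m < d := (Nat.div_lt_iff_lt_mul hmpos).mpr
        (lt_of_lt_of_eq (ZMod.val_lt z) hcard)
      have hwlt : w.val / m < d := (Nat.div_lt_iff_lt_mul hmpos).mpr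
        (lt_of_lt_of_eq (ZMod.val_lt w) hcard)
      have h1' : z.val / m = w.val / m := by
        have := congrArg ZMod.val h1
        rwa [ZMod.val_cast_of_lt hzlt, ZMod.val_cast_of_lt hwlt] at this
      apply ZMod.val_injective
      calc z.val = m * (z.val / m) + z.val % m := (Nat.div_add_mod z.val m).symm
        _ = m * (w.val / m) + w.val % m := by rw [h1', h2]
        _ = w.val := Nat.div_add_mod w.val m
    have hGbij : Function.Bijective G := by
      refine (Fintype.bijective_iff_injective_and_card G).mpr ⟨hGinj, ?_⟩
      simp [ZMod.card, hcard]
    let eQ := Fintype.equivFin (Quotient s)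
    let E : ZMod n ≃ L :=
      ((Equiv.ofBijective G hGbij).trans
        ((Equiv.refl (ZMod d)).prodCongr eQ.symm)).trans E0
    -- key shift lemma
    have hGshift : ∀ z : ZMod n, G (z + (m : ZMod n)) = ((G z).1 + 1, (G z).2) := by
      intro z
      set v := z.val with hv
      have hvlt : v < n := ZMod.val_lt z
      have hw : (z + (m : ZMod n)).val = (v + m) % n := by
        rw [ZMod.val_add, ZMod.val_natCast, Nat.add_mod, Nat.mod_mod_of_dvd, ← Nat.add_mod]
        exact dvd_refl n
      set w := (z + (m : ZMod n)).val with hwdef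
      have hcases : w = v + m ∨ w + n = v + m := by
        rcases lt_or_ge (v + m) n with hlt | hge
        · left; rw [hw, Nat.mod_eq_of_lt hlt]
        · right
          have : (v + m) % n = v + m - n := by
            rw [Nat.mod_eq_sub_mod hge, Nat.mod_eq_of_lt (by omega)]
          rw [hw, this]; omega
      refine Prod.ext ?_ ?_
      · -- first components
        show ((w / m : ℕ) : ZMod d) = ((v / m : ℕ) : ZMod d) + 1
        rcases hcases with hc | hc
        · rw [hc, Nat.add_div_right _ hmpos]; push_cast; ring
        · have : w / m + d = v / m + 1 := by
            have e1 : (w + d * m) / m = w / m + d := by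
              rw [mul_comm d m, Nat.add_mul_div_left _ _ hmpos]
            have e2 : (v + m) / m = v / m + 1 := Nat.add_div_right _ hmpos
            rw [hcard] at hc
            rw [← hc] at e2
            omega
          have := congrArg (fun k : ℕ => (k : ZMod d)) this
          push_cast at this
          rw [ZMod.natCast_self] at this
          simpa using this
      · -- second components
        apply Fin.ext
        show w % m = v % m
        rcases hcases with hc | hc
        · rw [hc, Nat.add_mod_right]
        · have : v + m = w + d * m := by rw [hcard] at hc; omega
          have : (v + m) % m = (w + d * m) % m := by rw [this]
          rw [Nat.add_mod_right, mul_comm d m, Nat.add_mul_mod_self_left] at this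
          exact this.symm
    have hkey : ∀ z : ZMod n, φ (E z) = E (z + (m : ZMod n)) := by
      intro z
      show φ (f ((G z).1, eQ.symm (G z).2)) = f ((G (z + (m:ZMod n))).1, eQ.symm (G (z + (m:ZMod n))).2)
      rw [hGshift z]
      show φ (φ^[(G z).1.val] (eQ.symm (G z).2).out) = φ^[((G z).1 + 1).val] (eQ.symm (G z).2).out
      set y := (eQ.symm (G z).2).out
      have hval : ((G z).1 + 1).val = ((G z).1.val + 1) % d := by
        rw [ZMod.val_add, ZMod.val_one_eq_one_mod, Nat.add_mod, Nat.mod_mod_of_dvd _ (dvd_refl d), ← Nat.add_mod]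
      rw [hval, (hper y).iterate_mod_apply, Function.iterate_succ_apply']
    -- the successor permutation
    haveI : Fact (1 < n) := ⟨hL⟩
    let σ : Equiv.Perm L := (Equiv.permCongr E) (Equiv.addLeft (1 : ZMod n))
    have hσ : ∀ z : ZMod n, σ (E z) = E (z + 1) := by
      intro z
      simp only [σ, Equiv.permCongr_apply, Equiv.symm_apply_apply, Equiv.coe_addLeft]
      rw [add_comm]
    have hone : (1 : ZMod n) ≠ 0 := one_ne_zero
    have hσmove : ∀ x : L, σ x ≠ x := by
      intro x hx
      have : σ (E (E.symm x)) = E (E.symm x) := by rw [E.apply_symm_apply]; exact hx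
      rw [hσ] at this
      have := E.injective this
      exact hone ((left_eq_add).mp this.symm)
    have hpow : ∀ (k : ℕ) (z : ZMod n), (σ ^ k) (E z) = E (z + (k : ZMod n)) := by
      intro k
      induction k with
      | zero => intro z; simp
      | succ k ih =>
        intro z
        rw [pow_succ, Equiv.Perm.mul_apply, hσ z, ih (z + 1)]
        congr 1
        push_cast
        ring
    refine ⟨σ, ?_, ?_, ?_⟩
    · refine ⟨E 0, hσmove (E 0), ?_⟩
      intro y hy
      refine ⟨((E.symm y).val : ℤ), ?_⟩
      rw [zpow_natCast, hpow]
      rw [zero_add, ZMod.natCast_rightInverse (E.symm y), E.apply_symm_apply]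
    · refine Finset.eq_univ_iff_forall.mpr fun x => Equiv.Perm.mem_support.mpr (hσmove x)
    · ext x
      have hx : x = E (E.symm x) := (E.apply_symm_apply x).symm
      rw [Equiv.Perm.mul_apply, Equiv.Perm.mul_apply, hx, hσ, hkey, hkey, hσ]
      congr 1
      ring
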